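/- For every k ≥ 0, the gradient error of the IAG iteration satisfies ‖e^k‖ ≤ γ·L · ∑_{j = max(k−K,0)}^{k−1} ( ‖∇f(x^j)‖ + ‖e^j‖ ) (the sum being empty when k = 0; note e^0 = 0 since τ_i^0 = 0 for all i). -/

import Mathlib

open InnerProductSpace in
lemma grad_sum' {E : Type*} [NormedAddCommGroup E] [InnerProductSpace ℝ E]
    [CompleteSpace E] {ι : Type*} (s : Finset ι) (f : ι → E → ℝ) (x : E)
    (h : ∀ i ∈ s, DifferentiableAt ℝ (f i) x) :
    gradient (fun y => ∑ i ∈ s, f i y) x = ∑ i ∈ s, gradient (f i) x := by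
  unfold gradient
  rw [fderiv_fun_sum h, map_sum]

/-- Recursive bound for the gradient error of the IAG iteration in terms of
gradient norms and previous gradient errors. -/
theorem iag_grad_error_recursive_bound
    (n m : ℕ) (hm : 1 ≤ m)
    (f : Fin m → EuclideanSpace ℝ (Fin n) → ℝ)
    (Li : Fin m → ℝ) (hLi : ∀ i, 0 ≤ Li i)
    (L : ℝ) (hL : L = ∑ i, Li i)
    (hconv : ∀ i, ConvexOn ℝ Set.univ (f i))
    (hdiff : ∀ i, Differentiable ℝ (f i))
    (hlip : ∀ i y z, ‖gradient (f i) y - gradient (f i) z‖ ≤ Li i * ‖y - z‖)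
    (K : ℕ) (hK : 1 ≤ K)
    (τ : Fin m → ℕ → ℕ)
    (hτ : ∀ i k, k - K ≤ τ i k ∧ τ i k ≤ k)
    (hτ0 : ∀ i, τ i 0 = 0)
    (F : EuclideanSpace ℝ (Fin n) → ℝ) (hF : F = fun y => ∑ i, f i y)
    (x g e : ℕ → EuclideanSpace ℝ (Fin n))
    (hg : ∀ k, g k = ∑ i, gradient (f i) (x (τ i k)))
    (he : ∀ k, e k = g k - gradient F (x k))
    (γ : ℝ) (hγ : 0 < γ)
    (hx : ∀ k, x (k + 1) = x k - γ • g k) :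
    ∀ k, ‖e k‖ ≤ γ * L * ∑ j ∈ Finset.Ico (k - K) k, (‖gradient F (x j)‖ + ‖e j‖) := by
  -- gradient of F is sum of gradients
  have hgradF : ∀ y, gradient F y = ∑ i, gradient (f i) y := by
    intro y
    rw [hF, grad_sum' _ _ _ (fun i _ => (hdiff i).differentiableAt)]
  -- bound on g j
  have hgbound : ∀ j, ‖g j‖ ≤ ‖gradient F (x j)‖ + ‖e j‖ := by
    intro j
    have : g j = gradient F (x j) + e j := by rw [he j]; abel
    rw [this]
    exact norm_add_le _ _
  -- displacement bound
  have hdisp : ∀ a b : ℕ, a ≤ b → ‖x a - x b‖ ≤ γ * ∑ j ∈ Finset.Ico a b, ‖g j‖ := by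
    intro a b hab
    induction b with
    | zero => simp [Nat.le_zero.mp hab]
    | succ b ih =>
      rcases Nat.lt_or_ge a (b+1) with h | h
      · have hab' : a ≤ b := Nat.lt_succ_iff.mp h
        have : x a - x (b+1) = (x a - x b) + γ • g b := by rw [hx b]; abel
        calc ‖x a - x (b+1)‖ ≤ ‖x a - x b‖ + ‖γ • g b‖ := by rw [this]; exact norm_add_le _ _
          _ ≤ γ * ∑ j ∈ Finset.Ico a b, ‖g j‖ + γ * ‖g b‖ := by
              rw [norm_smul, Real.norm_eq_abs, abs_of_pos hγ]
              exact add_le_add_left (ih hab') _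
          _ = γ * ∑ j ∈ Finset.Ico a (b+1), ‖g j‖ := by
              rw [Finset.sum_Ico_succ_top hab']; ring
      · have : a = b + 1 := le_antisymm hab h
        simp [this]
  -- main
  intro k
  set S := ∑ j ∈ Finset.Ico (k - K) k, (‖gradient F (x j)‖ + ‖e j‖) with hS
  have hSnn : ∀ j ∈ Finset.Ico (k-K) k, (0:ℝ) ≤ ‖gradient F (x j)‖ + ‖e j‖ :=
    fun j _ => add_nonneg (norm_nonneg _) (norm_nonneg _)
  have hgS : ∀ i : Fin m, ∑ j ∈ Finset.Ico (τ i k) k, ‖g j‖ ≤ S := by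
    intro i
    calc ∑ j ∈ Finset.Ico (τ i k) k, ‖g j‖
        ≤ ∑ j ∈ Finset.Ico (τ i k) k, (‖gradient F (x j)‖ + ‖e j‖) :=
          Finset.sum_le_sum (fun j _ => hgbound j)
      _ ≤ S := Finset.sum_le_sum_of_subset_of_nonneg
          (Finset.Ico_subset_Ico (hτ i k).1 le_rfl) (fun j hj _ => hSnn j hj)
  have hek : e k = ∑ i, (gradient (f i) (x (τ i k)) - gradient (f i) (x k)) := by
    rw [he k, hg k, hgradF, ← Finset.sum_sub_distrib]
  calc ‖e k‖ ≤ ∑ i, ‖gradient (f i) (x (τ i k)) - gradient (f i) (x k)‖ := by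
        rw [hek]; exact norm_sum_le _ _
    _ ≤ ∑ i, Li i * (γ * S) := by
        apply Finset.sum_le_sum
        intro i _
        calc ‖gradient (f i) (x (τ i k)) - gradient (f i) (x k)‖
            ≤ Li i * ‖x (τ i k) - x k‖ := hlip i _ _
          _ ≤ Li i * (γ * S) := by
              apply mul_le_mul_of_nonneg_left _ (hLi i)
              calc ‖x (τ i k) - x k‖ ≤ γ * ∑ j ∈ Finset.Ico (τ i k) k, ‖g j‖ :=
                    hdisp _ _ (hτ i k).2
                _ ≤ γ * S := mul_le_mul_of_nonneg_left (hgS i) hγ.le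
    _ = γ * L * S := by rw [hL, ← Finset.sum_mul]; ring
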